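/- Two bounded automorphisms of the regular rooted d-ary tree T are conjugate in the full automorphism group Aut(T) if and only if they are conjugate in the group F(X) of finite-state automorphisms. -/

import Mathlib

open List

/-- Vertices of the rooted `d`-ary tree `T`: finite words over the alphabet
`X = Fin d`. -/
abbrev Vertex (d : ℕ) := List (Fin d)

/-- `g` is an automorphism of the rooted `d`-ary tree: a bijection of the
vertex set `X*` preserving word length and the prefix relation. -/
def IsTreeAut {d : ℕ} (g : Equiv.Perm (Vertex d)) : Prop :=
  (∀ v : Vertex d, (g v).length = v.length) ∧
    ∀ v w : Vertex d, g v <+: g (v ++ w)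

theorem IsTreeAut.prefix_mono {d : ℕ} {g : Equiv.Perm (Vertex d)} (hg : IsTreeAut g)
    {u u' : Vertex d} (h : u <+: u') : g u <+: g u' := by
  obtain ⟨t, rfl⟩ := h
  exact hg.2 u t

/-- The automorphism group `Aut(T)` of the rooted `d`-ary tree, as a subgroup
of the group of permutations of the vertex set. -/
def treeAut (d : ℕ) : Subgroup (Equiv.Perm (Vertex d)) where
  carrier := {g | IsTreeAut g}
  one_mem' := ⟨fun _ => rfl, fun v w => ⟨w, rfl⟩⟩
  mul_mem' := by
    intro g h hg hh
    obtain ⟨hg1, hg2⟩ := hg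
    obtain ⟨hh1, hh2⟩ := hh
    refine ⟨fun v => ?_, fun v w => ?_⟩
    · simp [Equiv.Perm.mul_apply, hg1, hh1]
    · obtain ⟨t, ht⟩ := hh2 v w
      simp only [Equiv.Perm.mul_apply]
      rw [← ht]
      exact hg2 (h v) t
  inv_mem' := by
    intro g hgmem
    obtain ⟨hg1, hg2⟩ := hgmem
    have hg : IsTreeAut g := ⟨hg1, hg2⟩
    have hlen' : ∀ v : Vertex d, (g⁻¹ v).length = v.length := by
      intro v
      conv_rhs => rw [← (show g (g⁻¹ v) = v from g.apply_symm_apply v)]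
      rw [hg1]
    refine ⟨hlen', fun v w => ?_⟩
    have hle : (g⁻¹ v).length ≤ (g⁻¹ (v ++ w)).length := by
      have h1 := hlen' v
      have h2 := hlen' (v ++ w)
      rw [List.length_append] at h2
      omega
    have htp : (g⁻¹ (v ++ w)).take (g⁻¹ v).length <+: g⁻¹ (v ++ w) :=
      List.take_prefix _ _
    have hgtp : g ((g⁻¹ (v ++ w)).take (g⁻¹ v).length) <+: v ++ w := by
      have := hg.prefix_mono htp
      rwa [(show g (g⁻¹ (v ++ w)) = v ++ w from g.apply_symm_apply (v ++ w))] at this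
    have hlen_tp : (g ((g⁻¹ (v ++ w)).take (g⁻¹ v).length)).length = v.length := by
      rw [hg1, List.length_take, min_eq_left hle, hlen' v]
    have hveq : g ((g⁻¹ (v ++ w)).take (g⁻¹ v).length) = v := by
      have h1 := List.prefix_iff_eq_take.mp hgtp
      have h2 := List.prefix_iff_eq_take.mp (List.prefix_append v w)
      rw [h1, hlen_tp]
      exact h2.symm
    have hkey : (g⁻¹ (v ++ w)).take (g⁻¹ v).length = g⁻¹ v := by
      apply g.injective
      rw [hveq, (show g (g⁻¹ v) = v from g.apply_symm_apply v)]
    rw [← hkey]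
    exact htp

open scoped Classical in
/-- The state (section) `g|_v` of `g` at the vertex `v` : the unique
automorphism satisfying `g (v ++ w) = g v ++ (g|_v) w` for all `w`. -/
noncomputable def state {d : ℕ} (g : Equiv.Perm (Vertex d)) (v : Vertex d) :
    Equiv.Perm (Vertex d) :=
  if h : Function.Bijective (fun w : Vertex d => (g (v ++ w)).drop v.length) then
    Equiv.ofBijective _ h
  else 1

/-- A finite-state automorphism: one having finitely many states.  The
finite-state automorphisms form the group `F(X)`. -/
def FiniteState {d : ℕ} (g : Equiv.Perm (Vertex d)) : Prop :=
  (Set.range fun v : Vertex d => state g v).Finite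

/-- The cardinality of the orbit `Orb_a(v)` of the vertex `v` under the cyclic
group generated by `a`. -/
noncomputable def orbitCard {d : ℕ} (a : Equiv.Perm (Vertex d)) (v : Vertex d) : ℕ :=
  Nat.card (Set.range fun n : ℤ => (a ^ n) v)

/-- The orbit-signalizer `OS(a) = { a^m|_v : v ∈ X^*, m = |Orb_a(v)| }`. -/
noncomputable def OS {d : ℕ} (a : Equiv.Perm (Vertex d)) : Set (Equiv.Perm (Vertex d)) :=
  {s | ∃ v : Vertex d, s = state (a ^ orbitCard a v) v}

/-- `a` has finite orbit-signalizer. -/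
def FiniteOS {d : ℕ} (a : Equiv.Perm (Vertex d)) : Prop := (OS a).Finite

/-- A self-similar (state-closed) subgroup. -/
def SelfSimilar {d : ℕ} (G : Subgroup (Equiv.Perm (Vertex d))) : Prop :=
  ∀ g ∈ G, ∀ v : Vertex d, state g v ∈ G

/-- A contracting group: there is a finite set `N ⊆ G` such that every
`g ∈ G` has all its states in `N` from some level on. -/
def ContractingGroup {d : ℕ} (G : Subgroup (Equiv.Perm (Vertex d))) : Prop :=
  ∃ N : Set (Equiv.Perm (Vertex d)), N.Finite ∧ N ⊆ (G : Set (Equiv.Perm (Vertex d))) ∧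
    ∀ g ∈ G, ∃ n : ℕ, ∀ v : Vertex d, n ≤ v.length → state g v ∈ N

/-- A contracting automorphism: the self-similar group generated by all of its
states is contracting. -/
def ContractingAut {d : ℕ} (f : Equiv.Perm (Vertex d)) : Prop :=
  ContractingGroup (Subgroup.closure (Set.range fun v : Vertex d => state f v))

/-- The activity sequence `θ_k(g)`: the number of vertices `v` of level `k`
whose state `g|_v` acts nontrivially on the first level `X`. -/
noncomputable def theta {d : ℕ} (g : Equiv.Perm (Vertex d)) (k : ℕ) : ℕ :=
  Nat.card {v : Vertex d // v.length = k ∧ ∃ x : Fin d, state g v [x] ≠ [x]}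

/-- A bounded automorphism: a finite-state automorphism with bounded activity
sequence.  The bounded automorphisms form the group `Pol(0)`. -/
def BoundedAut {d : ℕ} (g : Equiv.Perm (Vertex d)) : Prop :=
  FiniteState g ∧ ∃ C : ℕ, ∀ k : ℕ, theta g k ≤ C

/-- A polynomial automorphism (an element of `Pol(∞)`): a finite-state
automorphism whose activity sequence is polynomially bounded. -/
def PolyAut {d : ℕ} (g : Equiv.Perm (Vertex d)) : Prop :=
  FiniteState g ∧ ∃ p : Polynomial ℕ, ∀ k : ℕ, theta g k ≤ p.eval k

/-- A finitary automorphism (an element of `Pol(-1)`): all states at some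
level are trivial. -/
def Finitary {d : ℕ} (g : Equiv.Perm (Vertex d)) : Prop :=
  ∃ k : ℕ, ∀ v : Vertex d, v.length = k → state g v = 1

/-- A functionally recursive automorphism: a member of some finitely generated
self-similar subgroup of `Aut(T)`.  These form the group `FR(X)`. -/
def FunctionallyRecursive {d : ℕ} (g : Equiv.Perm (Vertex d)) : Prop :=
  ∃ G : Subgroup (Equiv.Perm (Vertex d)), G ≤ treeAut d ∧ SelfSimilar G ∧
    (∃ S : Set (Equiv.Perm (Vertex d)), S.Finite ∧ G = Subgroup.closure S) ∧ g ∈ G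
theorem Equiv.Perm.apply_inv_self {α : Type*} (f : Equiv.Perm α) (x : α) : f (f⁻¹ x) = x :=
  f.apply_symm_apply x

theorem Equiv.Perm.inv_apply_self {α : Type*} (f : Equiv.Perm α) (x : α) : f⁻¹ (f x) = x :=
  f.symm_apply_apply x

namespace TreeAutProof

variable {d : ℕ}

theorem ta_len {g : Equiv.Perm (Vertex d)} (hg : IsTreeAut g) (v : Vertex d) :
    (g v).length = v.length := hg.1 v

theorem ta_nil {g : Equiv.Perm (Vertex d)} (hg : IsTreeAut g) : g ([] : Vertex d) = [] := by
  have := hg.1 ([] : Vertex d); simpa using List.length_eq_zero_iff.mp this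

theorem ta_decomp {g : Equiv.Perm (Vertex d)} (hg : IsTreeAut g) (v w : Vertex d) :
    g (v ++ w) = g v ++ (g (v ++ w)).drop v.length := by
  obtain ⟨t, ht⟩ := hg.2 v w
  rw [← ht]
  congr 1
  rw [show v.length = (g v).length from (hg.1 v).symm, List.drop_left]

theorem ta_dropMap_bijective {g : Equiv.Perm (Vertex d)} (hg : IsTreeAut g)
    (v : Vertex d) :
    Function.Bijective (fun w : Vertex d => (g (v ++ w)).drop v.length) := by
  constructor
  · intro w1 w2 h
    simp only at h
    have e1 := ta_decomp hg v w1
    have e2 := ta_decomp hg v w2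
    have : g (v ++ w1) = g (v ++ w2) := by rw [e1, e2, h]
    have := g.injective this
    exact List.append_cancel_left this
  · intro u
    have hlen' : ∀ w : Vertex d, (g⁻¹ w).length = w.length := by
      intro w
      conv_rhs => rw [← Equiv.Perm.apply_inv_self g w]
      rw [hg.1]
    obtain ⟨z, hz⟩ : ∃ z, g z = g v ++ u := ⟨g⁻¹ (g v ++ u), Equiv.Perm.apply_inv_self g _⟩
    have hzlen : z.length = v.length + u.length := by
      have := hg.1 z
      rw [hz, List.length_append, hg.1] at this
      omega
    have hpref : v <+: z := by
      have h1 : g (z.take v.length) <+: g z := hg.prefix_mono (List.take_prefix _ _)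
      have hlt : (g (z.take v.length)).length = v.length := by
        rw [hg.1, List.length_take]; omega
      have hgv : g (z.take v.length) = g v := by
        have h3 := List.prefix_iff_eq_take.mp h1
        rw [h3, hlt, hz, List.take_left' (hg.1 v)]
      have := g.injective hgv
      exact this ▸ List.take_prefix _ _
    obtain ⟨w, hw⟩ := hpref
    refine ⟨w, ?_⟩
    simp only
    rw [← hw] at hz
    rw [hz, show v.length = (g v).length from (hg.1 v).symm, List.drop_left]

theorem state_apply {g : Equiv.Perm (Vertex d)} (hg : IsTreeAut g) (v w : Vertex d) :
    state g v w = (g (v ++ w)).drop v.length := by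
  rw [state, dif_pos (ta_dropMap_bijective hg v)]; rfl

theorem apply_append {g : Equiv.Perm (Vertex d)} (hg : IsTreeAut g) (v w : Vertex d) :
    g (v ++ w) = g v ++ state g v w := by
  rw [state_apply hg]; exact ta_decomp hg v w

theorem state_len {g : Equiv.Perm (Vertex d)} (hg : IsTreeAut g) (v w : Vertex d) :
    (state g v w).length = w.length := by
  rw [state_apply hg, List.length_drop, hg.1, List.length_append]; omega

theorem state_ta {g : Equiv.Perm (Vertex d)} (hg : IsTreeAut g) (v : Vertex d) :
    IsTreeAut (state g v) := by
  refine ⟨state_len hg v, fun w u => ?_⟩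
  have h1 : g (v ++ w) ++ state g (v ++ w) u = g v ++ state g v (w ++ u) := by
    rw [← apply_append hg (v ++ w) u, ← apply_append hg v (w ++ u), List.append_assoc]
  have h2 : g (v ++ w) = g v ++ state g v w := apply_append hg v w
  rw [h2, List.append_assoc] at h1
  have := List.append_cancel_left h1
  exact ⟨_, this⟩

theorem ta_mul {g h : Equiv.Perm (Vertex d)} (hg : IsTreeAut g) (hh : IsTreeAut h) :
    IsTreeAut (g * h) := (treeAut d).mul_mem hg hh

theorem ta_inv {g : Equiv.Perm (Vertex d)} (hg : IsTreeAut g) : IsTreeAut g⁻¹ :=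
  (treeAut d).inv_mem hg

theorem ta_one : IsTreeAut (1 : Equiv.Perm (Vertex d)) := (treeAut d).one_mem

theorem ta_pow {g : Equiv.Perm (Vertex d)} (hg : IsTreeAut g) (n : ℕ) :
    IsTreeAut (g ^ n) := (treeAut d).pow_mem hg n

theorem state_mul {g h : Equiv.Perm (Vertex d)} (hg : IsTreeAut g) (hh : IsTreeAut h)
    (v : Vertex d) : state (g * h) v = state g (h v) * state h v := by
  apply Equiv.ext
  intro w
  have key : (g * h) (v ++ w) = g (h v) ++ (state g (h v)) (state h v w) := by
    have : (g * h) (v ++ w) = g (h (v ++ w)) := rfl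
    rw [this, apply_append hh v w, apply_append hg (h v) (state h v w)]
  have key2 : (g * h) (v ++ w) = (g * h) v ++ state (g * h) v w := apply_append (ta_mul hg hh) v w
  have hv : (g * h) v = g (h v) := rfl
  rw [key2, hv] at key
  have := List.append_cancel_left key
  rw [Equiv.Perm.mul_apply, this]

theorem state_one (v : Vertex d) : state (1 : Equiv.Perm (Vertex d)) v = 1 := by
  apply Equiv.ext
  intro w
  rw [state_apply ta_one]
  simp

theorem state_inv {g : Equiv.Perm (Vertex d)} (hg : IsTreeAut g) (v : Vertex d) :
    state g⁻¹ v = (state g (g⁻¹ v))⁻¹ := by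
  have h1 : state g (g⁻¹ v) * state g⁻¹ v = 1 := by
    have := state_mul hg (ta_inv hg) v
    rw [mul_inv_cancel, state_one] at this
    exact this.symm
  exact (inv_eq_of_mul_eq_one_right h1).symm

theorem state_state {g : Equiv.Perm (Vertex d)} (hg : IsTreeAut g) (u v : Vertex d) :
    state g (u ++ v) = state (state g u) v := by
  apply Equiv.ext
  intro w
  rw [state_apply (state_ta hg u), state_apply hg, state_apply hg, List.append_assoc,
    List.length_append, ← List.drop_drop]

theorem pow_apply_fixed {g : Equiv.Perm (Vertex d)} {v : Vertex d} (hv : g v = v) (n : ℕ) :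
    (g ^ n) v = v := by
  induction n with
  | zero => rfl
  | succ m ihm => rw [pow_succ, Equiv.Perm.mul_apply, hv, ihm]

theorem state_pow_of_fixed {g : Equiv.Perm (Vertex d)} (hg : IsTreeAut g) {v : Vertex d}
    (hv : g v = v) (n : ℕ) : state (g ^ n) v = (state g v) ^ n := by
  induction n with
  | zero => simp [state_one]
  | succ n ih =>
    rw [pow_succ', state_mul hg (ta_pow hg n), ih, pow_apply_fixed hv, pow_succ']

theorem state_nil {g : Equiv.Perm (Vertex d)} (hg : IsTreeAut g) :
    state g ([] : Vertex d) = g := by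
  apply Equiv.ext
  intro w
  rw [state_apply hg]
  simp

end TreeAutProof
namespace TreeAutProof

variable {d : ℕ}

open Function

theorem mem_periodicPts_of_finite {α : Type*} {f : α → α} (hf : Function.Injective f) (x : α)
    (hfin : (Set.range fun n : ℕ => f^[n] x).Finite) : x ∈ periodicPts f := by
  have : Finite ↥(Set.range fun n : ℕ => f^[n] x) := hfin
  obtain ⟨i, j, hij, hfe⟩ := Finite.exists_ne_map_eq_of_infinite
    (fun n : ℕ => (⟨f^[n] x, Set.mem_range_self n⟩ : ↥(Set.range fun n : ℕ => f^[n] x)))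
  have heq : f^[i] x = f^[j] x := congrArg Subtype.val hfe
  rcases Nat.lt_or_ge i j with h | h
  · have : f^[i] (f^[j - i] x) = f^[i] x := by
      rw [← iterate_add_apply]
      rw [show i + (j - i) = j by omega]
      exact heq.symm
    have hper : f^[j - i] x = x := (hf.iterate i) this
    exact mk_mem_periodicPts (by omega) hper
  · have hij' : j < i := by omega
    have : f^[j] (f^[i - j] x) = f^[j] x := by
      rw [← iterate_add_apply]
      rw [show j + (i - j) = i by omega]
      exact heq
    have hper : f^[i - j] x = x := (hf.iterate j) this
    exact mk_mem_periodicPts (by omega) hper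

theorem vertex_level_finite (n : ℕ) : {v : Vertex d | v.length = n}.Finite :=
  List.finite_length_eq (Fin d) n

theorem ta_mem_periodicPts {a : Equiv.Perm (Vertex d)} (ha : IsTreeAut a) (v : Vertex d) :
    v ∈ periodicPts (⇑a) := by
  apply mem_periodicPts_of_finite a.injective v
  apply (vertex_level_finite v.length).subset
  rintro _ ⟨n, rfl⟩
  simp only [Set.mem_setOf_eq]
  rw [Equiv.Perm.iterate_eq_pow]
  exact (ta_pow ha n).1 v

/-- abbreviation for the minimal period -/
noncomputable def mper (a : Equiv.Perm (Vertex d)) (v : Vertex d) : ℕ :=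
  Function.minimalPeriod (⇑a) v

theorem mper_pos {a : Equiv.Perm (Vertex d)} (ha : IsTreeAut a) (v : Vertex d) :
    0 < mper a v := minimalPeriod_pos_of_mem_periodicPts (ta_mem_periodicPts ha v)

theorem pow_mper_fixed {a : Equiv.Perm (Vertex d)} (v : Vertex d) :
    (a ^ mper a v) v = v := by
  have := iterate_minimalPeriod (f := ⇑a) (x := v)
  rwa [Equiv.Perm.iterate_eq_pow] at this

theorem pow_fixed_iff_mper {a : Equiv.Perm (Vertex d)} (v : Vertex d) (n : ℕ) :
    (a ^ n) v = v ↔ mper a v ∣ n := by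
  unfold mper
  rw [← isPeriodicPt_iff_minimalPeriod_dvd]
  unfold IsPeriodicPt IsFixedPt
  rw [Equiv.Perm.iterate_eq_pow]

theorem zpow_fixed {a : Equiv.Perm (Vertex d)} {v : Vertex d} (hv : a v = v) (q : ℤ) :
    (a ^ q) v = v := by
  rcases q with n | n
  · rw [Int.ofNat_eq_coe, zpow_natCast]; exact pow_apply_fixed hv n
  · rw [zpow_negSucc]
    have h1 : (a ^ (n + 1)) v = v := pow_apply_fixed hv (n + 1)
    have := congrArg (⇑(a ^ (n + 1))⁻¹) h1
    rw [Equiv.Perm.inv_apply_self] at this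
    exact this.symm

theorem zpow_reduce {a : Equiv.Perm (Vertex d)} (ha : IsTreeAut a) (v : Vertex d) (n : ℤ) :
    (a ^ n) v = (a ^ (n % (mper a v : ℤ)).toNat) v := by
  set T : ℤ := (mper a v : ℤ) with hT
  have hTpos : (0:ℤ) ≤ T := by positivity
  have hsplit : n = T * (n / T) + n % T := (Int.mul_ediv_add_emod n T).symm
  have h1 : a ^ n = a ^ (T * (n / T)) * a ^ (n % T) := by
    rw [← zpow_add]; rw [← hsplit]
  rw [h1, Equiv.Perm.mul_apply]
  have hTne : T ≠ 0 := by
    have := mper_pos ha v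
    simp only [hT]
    exact_mod_cast this.ne'
  have hmod : ((n % T).toNat : ℤ) = n % T :=
    Int.toNat_of_nonneg (Int.emod_nonneg n hTne)
  rw [← hmod, zpow_natCast]
  have hfix : (a ^ (T * (n / T))) ((a ^ (n % T).toNat) v) = (a ^ (n % T).toNat) v := by
    rw [zpow_mul]
    apply zpow_fixed
    rw [hT, zpow_natCast]
    have hc : a ^ mper a v * a ^ (n % T).toNat = a ^ (n % T).toNat * a ^ mper a v := by
      rw [← pow_add, ← pow_add, Nat.add_comm]
    calc (a ^ mper a v) ((a ^ (n % T).toNat) v)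
        = (a ^ mper a v * a ^ (n % T).toNat) v := rfl
      _ = (a ^ (n % T).toNat * a ^ mper a v) v := by rw [hc]
      _ = (a ^ (n % T).toNat) v := by rw [Equiv.Perm.mul_apply, pow_mper_fixed]
  exact hfix

end TreeAutProof
namespace TreeAutProof

variable {d : ℕ}

open Function

theorem orbitCard_eq_mper {a : Equiv.Perm (Vertex d)} (ha : IsTreeAut a) (v : Vertex d) :
    orbitCard a v = mper a v := by
  have hrange : (Set.range fun n : ℤ => (a ^ n) v)
      = ↑((Finset.range (mper a v)).image (fun j => (a ^ j) v)) := by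
    ext u
    simp only [Set.mem_range, Finset.coe_image, Finset.coe_range, Set.mem_image, Set.mem_Iio]
    constructor
    · rintro ⟨n, rfl⟩
      refine ⟨(n % (mper a v : ℤ)).toNat, ?_, (zpow_reduce ha v n).symm⟩
      have hTpos : 0 < (mper a v : ℤ) := by exact_mod_cast mper_pos ha v
      have h1 := Int.emod_lt_of_pos n hTpos
      have h2 := Int.emod_nonneg n hTpos.ne'
      omega
    · rintro ⟨j, _, rfl⟩
      exact ⟨(j : ℤ), by rw [zpow_natCast]⟩
  rw [orbitCard, hrange, Nat.card_coe_set_eq, Set.ncard_coe_finset,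
    Finset.card_image_of_injOn, Finset.card_range]
  intro i hi j hj hij
  have hinj := Function.iterate_injOn_Iio_minimalPeriod (f := ⇑a) (x := v)
  simp only [Finset.coe_range] at hi hj
  apply hinj hi hj
  simpa [Equiv.Perm.iterate_eq_pow] using hij

theorem orbitCard_pos {a : Equiv.Perm (Vertex d)} (ha : IsTreeAut a) (v : Vertex d) :
    0 < orbitCard a v := by rw [orbitCard_eq_mper ha]; exact mper_pos ha v

theorem pow_orbitCard_fixed {a : Equiv.Perm (Vertex d)} (ha : IsTreeAut a) (v : Vertex d) :
    (a ^ orbitCard a v) v = v := by rw [orbitCard_eq_mper ha]; exact pow_mper_fixed v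

theorem pow_fixed_iff {a : Equiv.Perm (Vertex d)} (ha : IsTreeAut a) (v : Vertex d) (n : ℕ) :
    (a ^ n) v = v ↔ orbitCard a v ∣ n := by
  rw [orbitCard_eq_mper ha]; exact pow_fixed_iff_mper v n

theorem orbit_injOn {a : Equiv.Perm (Vertex d)} (ha : IsTreeAut a) (v : Vertex d) :
    Set.InjOn (fun j : ℕ => (a ^ j) v) (Set.Iio (orbitCard a v)) := by
  rw [orbitCard_eq_mper ha]
  intro i hi j hj hij
  apply Function.iterate_injOn_Iio_minimalPeriod (f := ⇑a) (x := v) hi hj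
  simpa [Equiv.Perm.iterate_eq_pow] using hij

/-- The action of `g` on the first level. -/
def act (g : Equiv.Perm (Vertex d)) (x : Fin d) : Fin d := (g [x]).getD 0 x

theorem act_spec {g : Equiv.Perm (Vertex d)} (hg : IsTreeAut g) (x : Fin d) :
    g [x] = [act g x] := by
  have hlen : (g [x]).length = 1 := hg.1 [x]
  obtain ⟨y, hy⟩ := List.length_eq_one_iff.mp hlen
  rw [hy]; unfold act; rw [hy]; rfl

theorem act_mul {g h : Equiv.Perm (Vertex d)} (hg : IsTreeAut g) (hh : IsTreeAut h) (x : Fin d) :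
    act (g * h) x = act g (act h x) := by
  have h1 : (g * h) [x] = [act (g * h) x] := act_spec (ta_mul hg hh) x
  have h2 : (g * h) [x] = g (h [x]) := rfl
  rw [h2, act_spec hh, act_spec hg] at h1
  exact (List.cons.injEq _ _ _ _ ▸ h1).1.symm

theorem act_one (x : Fin d) : act (1 : Equiv.Perm (Vertex d)) x = x := rfl

theorem act_pow {g : Equiv.Perm (Vertex d)} (hg : IsTreeAut g) (n : ℕ) (x : Fin d) :
    act (g ^ n) x = (act g)^[n] x := by
  induction n with
  | zero => simp [act_one]
  | succ n ih =>
    rw [pow_succ', act_mul hg (ta_pow hg n), ih, Function.iterate_succ_apply']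

theorem act_inj {g : Equiv.Perm (Vertex d)} (hg : IsTreeAut g) :
    Function.Injective (act g) := by
  intro x y hxy
  have h1 : g [x] = g [y] := by rw [act_spec hg, act_spec hg, hxy]
  have := g.injective h1
  simpa using this

theorem state_cons {g : Equiv.Perm (Vertex d)} (hg : IsTreeAut g) (x : Fin d) (w : Vertex d) :
    g (x :: w) = act g x :: state g [x] w := by
  have : g ([x] ++ w) = g [x] ++ state g [x] w := apply_append hg [x] w
  simpa [act_spec hg] using this

theorem orbitCard_append_single {a : Equiv.Perm (Vertex d)} (ha : IsTreeAut a)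
    (v : Vertex d) (x : Fin d) :
    orbitCard a (v ++ [x]) =
      orbitCard a v * Function.minimalPeriod (act (state (a ^ orbitCard a v) v)) x := by
  set M := orbitCard a v with hM
  set s := state (a ^ M) v with hs
  set m := Function.minimalPeriod (act s) x with hm
  have hsta : IsTreeAut s := state_ta (ta_pow ha M) v
  have char : ∀ n : ℕ, (a ^ n) (v ++ [x]) = v ++ [x] ↔ (M * m) ∣ n := by
    intro n
    constructor
    · intro h
      have hsplit : (a ^ n) (v ++ [x]) = (a ^ n) v ++ state (a ^ n) v [x] :=
        apply_append (ta_pow ha n) v [x]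
      have h1 : (a ^ n) v = v := by
        have := congrArg (List.take v.length) (hsplit.symm.trans h)
        rwa [List.take_left' ((ta_pow ha n).1 v), List.take_left' rfl] at this
      have h2 : state (a ^ n) v [x] = [x] := by
        rw [hsplit, h1] at h
        exact List.append_cancel_left h
      obtain ⟨n', rfl⟩ := (pow_fixed_iff ha v n).mp h1
      have h3 : state (a ^ (M * n')) v = s ^ n' := by
        rw [pow_mul, state_pow_of_fixed (ta_pow ha M) (pow_orbitCard_fixed ha v)]
      rw [h3] at h2
      have h4 : act (s ^ n') x = x := by
        have := act_spec (ta_pow hsta n') x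
        rw [h2] at this
        exact ((List.cons.injEq _ _ _ _ ▸ this).1).symm
      rw [act_pow hsta] at h4
      have h5 : m ∣ n' := isPeriodicPt_iff_minimalPeriod_dvd.mp h4
      exact mul_dvd_mul_left M h5
    · rintro ⟨c, rfl⟩
      have hsplit : (a ^ (M * m * c)) (v ++ [x]) =
          (a ^ (M * m * c)) v ++ state (a ^ (M * m * c)) v [x] :=
        apply_append (ta_pow ha _) v [x]
      have h1 : (a ^ (M * m * c)) v = v :=
        (pow_fixed_iff ha v _).mpr ⟨m * c, by ring⟩
      have h2 : state (a ^ (M * m * c)) v = s ^ (m * c) := by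
        rw [show M * m * c = M * (m * c) by ring, pow_mul,
          state_pow_of_fixed (ta_pow ha M) (pow_orbitCard_fixed ha v)]
      have h3 : (act s)^[m * c] x = x := (isPeriodicPt_minimalPeriod (act s) x).mul_const c
      rw [hsplit, h1, h2]
      congr 1
      rw [act_spec (ta_pow hsta (m * c)) x, act_pow hsta, h3]
  have hA : M * m ∣ orbitCard a (v ++ [x]) :=
    (char _).mp (pow_orbitCard_fixed ha (v ++ [x]))
  have hB : orbitCard a (v ++ [x]) ∣ M * m :=
    (pow_fixed_iff ha (v ++ [x]) _).mp ((char (M * m)).mpr dvd_rfl)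
  exact Nat.dvd_antisymm hB hA

end TreeAutProof
namespace TreeAutProof

variable {d : ℕ}

open scoped Classical

theorem nontrivial_has_active {g : Equiv.Perm (Vertex d)} (hg : IsTreeAut g) (hne : g ≠ 1) :
    ∃ u : Vertex d, ∃ x : Fin d, state g u [x] ≠ [x] := by
  have hz' : ∃ z, g z ≠ z := by
    by_contra h; push_neg at h; exact hne (Equiv.ext h)
  obtain ⟨z, hz⟩ := hz'
  have hex : ∃ j, ¬ g (z.take j) = z.take j := ⟨z.length, by simpa [List.take_length] using hz⟩
  set jj := Nat.find hex with hjjdef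
  have hjj : ¬ g (z.take jj) = z.take jj := Nat.find_spec hex
  have hpos : 0 < jj := by
    rcases Nat.eq_zero_or_pos jj with h0 | h
    · exfalso; apply hjj; rw [h0]; simpa using ta_nil hg
    · exact h
  have hjlt : jj ≤ z.length := Nat.find_le (by simpa [List.take_length] using hz)
  have hprev : g (z.take (jj - 1)) = z.take (jj - 1) := by
    have := Nat.find_min hex (show jj - 1 < jj by omega)
    simpa using this
  have hidx : jj - 1 < z.length := by omega
  set u := z.take (jj - 1) with hu
  set x := z.get ⟨jj - 1, hidx⟩ with hx
  have htake : z.take jj = u ++ [x] := by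
    have := List.take_concat_get (l := z) (i := jj - 1) hidx
    rw [show jj - 1 + 1 = jj by omega] at this
    rw [← this, hu, hx, List.concat_eq_append]
    rfl
  refine ⟨u, x, fun hcontra => ?_⟩
  apply hjj
  rw [htake, apply_append hg, hprev, hcontra]

/-- bounded products of elements of `S` -/
def listProds (S : Set (Equiv.Perm (Vertex d))) (K : ℕ) : Set (Equiv.Perm (Vertex d)) :=
  {g | ∃ l : List (Equiv.Perm (Vertex d)), (∀ y ∈ l, y ∈ S) ∧ l.length ≤ K ∧ g = l.prod}

theorem listProds_mono {S : Set (Equiv.Perm (Vertex d))} {K K' : ℕ} (h : K ≤ K') :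
    listProds S K ⊆ listProds S K' := by
  rintro g ⟨l, h1, h2, rfl⟩
  exact ⟨l, h1, le_trans h2 h, rfl⟩

theorem one_mem_listProds (S : Set (Equiv.Perm (Vertex d))) (K : ℕ) :
    (1 : Equiv.Perm (Vertex d)) ∈ listProds S K :=
  ⟨[], by simp, by simp, by simp⟩

theorem mul_mem_listProds {S : Set (Equiv.Perm (Vertex d))} {K : ℕ}
    {y g : Equiv.Perm (Vertex d)} (hy : y ∈ S) (hgm : g ∈ listProds S K) :
    y * g ∈ listProds S (K + 1) := by
  obtain ⟨l, h1, h2, rfl⟩ := hgm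
  exact ⟨y :: l, by
    intro z hzz
    rcases List.mem_cons.mp hzz with h | h
    · exact h ▸ hy
    · exact h1 z h, by simpa using h2, by simp⟩

theorem listProds_finite {S : Set (Equiv.Perm (Vertex d))} (hS : S.Finite) (K : ℕ) :
    (listProds S K).Finite := by
  induction K with
  | zero =>
    apply Set.Finite.subset (Set.finite_singleton 1)
    rintro g ⟨l, _, h2, rfl⟩
    have hl : l = [] := List.length_eq_zero_iff.mp (Nat.le_zero.mp h2)
    simp [hl]
  | succ K ih =>
    apply Set.Finite.subset (ih.union (((hS.prod ih).image (fun p => p.1 * p.2))))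
    rintro g ⟨l, h1, h2, rfl⟩
    match l with
    | [] => exact Or.inl (one_mem_listProds S K)
    | y :: l' =>
      right
      refine ⟨(y, l'.prod), ⟨h1 y (by simp), ⟨l', fun z hzz => h1 z (by simp [hzz]), by
        simpa using h2, rfl⟩⟩, by simp⟩

theorem nontrivial_count {a : Equiv.Perm (Vertex d)} (ha : IsTreeAut a)
    (hfs : FiniteState a) {C : ℕ} (hC : ∀ k : ℕ, theta a k ≤ C) (u : Vertex d) (k : ℕ)
    (hk : k ≤ orbitCard a u) :
    ((Finset.range k).filter fun j => state a ((a ^ j) u) ≠ 1).card ≤ hfs.toFinset.card * C := by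
  set Q : Equiv.Perm (Vertex d) → Prop :=
    fun g => ∃ uu : Vertex d, ∃ xx : Fin d, state g uu [xx] ≠ [xx] with hQdef
  set wit : Equiv.Perm (Vertex d) → Vertex d :=
    fun g => if h : Q g then h.choose else [] with hwitdef
  have hwit : ∀ g, Q g → ∃ x : Fin d, state g (wit g) [x] ≠ [x] := by
    intro g h
    simp only [hwitdef, dif_pos h]
    exact h.choose_spec
  set F := (Finset.range k).filter fun j => state a ((a ^ j) u) ≠ 1 with hF
  set L : ℕ → ℕ := fun j => (wit (state a ((a ^ j) u))).length with hL
  set Lset := hfs.toFinset.image fun g => (wit g).length with hLset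
  have hmap : ∀ j ∈ F, L j ∈ Lset := by
    intro j hj
    apply Finset.mem_image_of_mem
    refine (Set.Finite.mem_toFinset (hs := hfs)).mpr ?_
    exact ⟨(a ^ j) u, rfl⟩
  rw [Finset.card_eq_sum_card_fiberwise hmap]
  calc ∑ ℓ₀ ∈ Lset, (F.filter fun j => L j = ℓ₀).card
      ≤ ∑ ℓ₀ ∈ Lset, C := by
        apply Finset.sum_le_sum
        intro ℓ₀ _
        -- the fiber injects into the theta set at level u.length + ℓ₀
        set T := {v : Vertex d // v.length = u.length + ℓ₀ ∧ ∃ x : Fin d, state a v [x] ≠ [x]}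
          with hT
        have hTfin : Finite T := by
          apply Set.Finite.to_subtype
          exact (vertex_level_finite (u.length + ℓ₀)).subset (fun v hv => hv.1)
        have hinj : ∃ φ : {j // j ∈ F.filter fun j => L j = ℓ₀} → T, Function.Injective φ := by
          have hprop : ∀ j : ℕ, j ∈ F.filter (fun j => L j = ℓ₀) →
              ((a ^ j) u ++ wit (state a ((a ^ j) u))).length = u.length + ℓ₀ ∧
              ∃ x : Fin d, state a ((a ^ j) u ++ wit (state a ((a ^ j) u))) [x] ≠ [x] := by
            intro j hj
            rw [Finset.mem_filter] at hj
            obtain ⟨hjF, hjL⟩ := hj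
            rw [hF, Finset.mem_filter, Finset.mem_range] at hjF
            obtain ⟨hjr, hjne⟩ := hjF
            constructor
            · rw [List.length_append, (ta_pow ha j).1 u]
              simp only [hL] at hjL
              omega
            · have hQg : Q (state a ((a ^ j) u)) :=
                nontrivial_has_active (state_ta ha _) hjne
              obtain ⟨x, hx⟩ := hwit _ hQg
              refine ⟨x, ?_⟩
              rw [state_state ha]
              exact hx
          refine ⟨fun j => ⟨(a ^ (j : ℕ)) u ++ wit (state a ((a ^ (j : ℕ)) u)), hprop j j.2⟩, ?_⟩
          rintro ⟨j1, hj1⟩ ⟨j2, hj2⟩ heq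
          have heq' : (a ^ j1) u ++ wit (state a ((a ^ j1) u))
              = (a ^ j2) u ++ wit (state a ((a ^ j2) u)) := congrArg Subtype.val heq
          apply Subtype.ext
          have h1 : (a ^ j1) u = (a ^ j2) u := by
            have := congrArg (List.take u.length) heq'
            rwa [List.take_left' ((ta_pow ha j1).1 u), List.take_left' ((ta_pow ha j2).1 u)]
              at this
          rw [Finset.mem_filter, hF, Finset.mem_filter, Finset.mem_range] at hj1 hj2
          have hj1r := hj1.1.1
          have hj2r := hj2.1.1
          exact orbit_injOn ha u (by simp only [Set.mem_Iio]; omega)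
            (by simp only [Set.mem_Iio]; omega) h1
        obtain ⟨φ, hφ⟩ := hinj
        calc (F.filter fun j => L j = ℓ₀).card
            = Nat.card {j // j ∈ F.filter fun j => L j = ℓ₀} :=
              (Nat.card_eq_finsetCard _).symm
          _ ≤ Nat.card T := Nat.card_le_card_of_injective φ hφ
          _ = theta a (u.length + ℓ₀) := rfl
          _ ≤ C := hC _
    _ = Lset.card * C := by rw [Finset.sum_const, smul_eq_mul]
    _ ≤ hfs.toFinset.card * C := Nat.mul_le_mul_right C Finset.card_image_le

theorem powState_mem_listProds {a : Equiv.Perm (Vertex d)} (ha : IsTreeAut a)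
    (hfs : FiniteState a) {C : ℕ} (hC : ∀ k : ℕ, theta a k ≤ C) (u : Vertex d) (k : ℕ)
    (hk : k ≤ orbitCard a u) :
    state (a ^ k) u ∈ listProds (Set.range fun v : Vertex d => state a v)
      (hfs.toFinset.card * C) := by
  suffices h : ∀ kk : ℕ, kk ≤ k →
      state (a ^ kk) u ∈ listProds (Set.range fun v : Vertex d => state a v)
        (((Finset.range kk).filter fun j => state a ((a ^ j) u) ≠ 1).card) by
    apply listProds_mono _ (h k le_rfl)
    exact nontrivial_count ha hfs hC u k hk
  intro kk
  induction kk with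
  | zero => intro _; simpa [pow_zero, state_one] using one_mem_listProds _ _
  | succ n ih =>
    intro hn
    have hdecomp : state (a ^ (n + 1)) u = state a ((a ^ n) u) * state (a ^ n) u := by
      rw [pow_succ', state_mul ha (ta_pow ha n)]
    have hmono : ((Finset.range n).filter fun j => state a ((a ^ j) u) ≠ 1).card ≤
        ((Finset.range (n + 1)).filter fun j => state a ((a ^ j) u) ≠ 1).card :=
      Finset.card_le_card (Finset.filter_subset_filter _ (Finset.range_subset_range.mpr (by omega)))
    by_cases hcase : state a ((a ^ n) u) = 1
    · rw [hdecomp, hcase, one_mul]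
      exact listProds_mono hmono (ih (by omega))
    · have hcard : ((Finset.range (n + 1)).filter fun j => state a ((a ^ j) u) ≠ 1).card =
          ((Finset.range n).filter fun j => state a ((a ^ j) u) ≠ 1).card + 1 := by
        rw [Finset.range_add_one, Finset.filter_insert, if_pos hcase,
          Finset.card_insert_of_notMem (by simp)]
      rw [hdecomp, hcard]
      exact mul_mem_listProds ⟨(a ^ n) u, rfl⟩ (ih (by omega))

/-- The set of all "partial power states" of a bounded automorphism is finite. -/
theorem powStates_finite {a : Equiv.Perm (Vertex d)} (ha : IsTreeAut a) (hba : BoundedAut a) :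
    {g : Equiv.Perm (Vertex d) |
      ∃ (u : Vertex d) (k : ℕ), k ≤ orbitCard a u ∧ g = state (a ^ k) u}.Finite := by
  obtain ⟨hfs, C, hC⟩ := hba
  apply Set.Finite.subset (listProds_finite hfs (hfs.toFinset.card * C))
  rintro g ⟨u, k, hk, rfl⟩
  exact powState_mem_listProds ha hfs hC u k hk

end TreeAutProof
namespace TreeAutProof

variable {d : ℕ}

open Function

/-- first-level period -/
noncomputable def fper (s : Equiv.Perm (Vertex d)) (x : Fin d) : ℕ :=
  Function.minimalPeriod (act s) x

theorem mem_periodicPts_act {s : Equiv.Perm (Vertex d)} (hs : IsTreeAut s) (x : Fin d) :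
    x ∈ periodicPts (act s) :=
  mem_periodicPts_of_finite (act_inj hs) x (Set.toFinite _)

theorem fper_pos {s : Equiv.Perm (Vertex d)} (hs : IsTreeAut s) (x : Fin d) :
    0 < fper s x := minimalPeriod_pos_of_mem_periodicPts (mem_periodicPts_act hs x)

theorem fper_iterate {s : Equiv.Perm (Vertex d)} (hs : IsTreeAut s) (x : Fin d) (j : ℕ) :
    fper s ((act s)^[j] x) = fper s x := by
  induction j with
  | zero => rfl
  | succ j ih =>
    rw [Function.iterate_succ_apply', fper, minimalPeriod_apply, ← fper, ih]
    exact mem_periodicPts_of_finite (act_inj hs) _ (Set.toFinite _)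

/-- first-level orbit -/
noncomputable def orbF (s : Equiv.Perm (Vertex d)) (x : Fin d) : Finset (Fin d) :=
  (Finset.range (fper s x)).image (fun j => (act s)^[j] x)

theorem mem_orbF_iff {s : Equiv.Perm (Vertex d)} (hs : IsTreeAut s) {x y : Fin d} :
    y ∈ orbF s x ↔ ∃ j : ℕ, (act s)^[j] x = y := by
  constructor
  · intro hy
    obtain ⟨j, _, hj⟩ := Finset.mem_image.mp hy
    exact ⟨j, hj⟩
  · rintro ⟨j, rfl⟩
    apply Finset.mem_image.mpr
    refine ⟨j % fper s x, Finset.mem_range.mpr (Nat.mod_lt _ (fper_pos hs x)), ?_⟩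
    exact Function.iterate_mod_minimalPeriod_eq

theorem x_mem_orbF {s : Equiv.Perm (Vertex d)} (hs : IsTreeAut s) (x : Fin d) :
    x ∈ orbF s x := (mem_orbF_iff hs).mpr ⟨0, rfl⟩

theorem orbF_act {s : Equiv.Perm (Vertex d)} (hs : IsTreeAut s) (x : Fin d) :
    orbF s (act s x) = orbF s x := by
  ext y
  rw [mem_orbF_iff hs, mem_orbF_iff hs]
  constructor
  · rintro ⟨j, rfl⟩
    exact ⟨j + 1, by rw [Function.iterate_succ_apply]⟩
  · rintro ⟨j, rfl⟩
    rcases j with _ | j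
    · refine ⟨fper s x - 1, ?_⟩
      simp only [Function.iterate_zero, id_eq]
      have h1 : (act s)^[fper s x] x = x := isPeriodicPt_minimalPeriod (act s) x
      have h2 : fper s x - 1 + 1 = fper s x := by have := fper_pos hs x; omega
      calc (act s)^[fper s x - 1] (act s x)
          = (act s)^[fper s x - 1 + 1] x := by rw [Function.iterate_succ_apply]
        _ = x := by rw [h2]; exact h1
    · exact ⟨j, by rw [Function.iterate_succ_apply]⟩

/-- representative: minimum of the first-level orbit -/
noncomputable def repp (s : Equiv.Perm (Vertex d)) (x : Fin d) : Fin d :=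
  if h : (orbF s x).Nonempty then (orbF s x).min' h else x

theorem repp_mem {s : Equiv.Perm (Vertex d)} (hs : IsTreeAut s) (x : Fin d) :
    repp s x ∈ orbF s x := by
  rw [repp, dif_pos ⟨x, x_mem_orbF hs x⟩]
  exact Finset.min'_mem _ _

theorem repp_act {s : Equiv.Perm (Vertex d)} (hs : IsTreeAut s) (x : Fin d) :
    repp s (act s x) = repp s x := by
  have h2 : (orbF s x).Nonempty := ⟨x, x_mem_orbF hs x⟩
  unfold repp
  simp only [orbF_act hs x]
  rw [dif_pos h2, dif_pos h2]

theorem fper_repp {s : Equiv.Perm (Vertex d)} (hs : IsTreeAut s) (x : Fin d) :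
    fper s (repp s x) = fper s x := by
  obtain ⟨j, hj⟩ := (mem_orbF_iff hs).mp (repp_mem hs x)
  rw [← hj, fper_iterate hs]

theorem exists_idx {s : Equiv.Perm (Vertex d)} (hs : IsTreeAut s) (x : Fin d) :
    ∃ i : ℕ, (act s)^[i] (repp s x) = x := by
  obtain ⟨j, hj⟩ := (mem_orbF_iff hs).mp (repp_mem hs x)
  have hjlt : ∃ j' : ℕ, j' < fper s x ∧ (act s)^[j'] x = repp s x := by
    refine ⟨j % fper s x, Nat.mod_lt _ (fper_pos hs x), ?_⟩
    unfold fper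
    rw [Function.iterate_mod_minimalPeriod_eq]; exact hj
  obtain ⟨j', hj'lt, hj'⟩ := hjlt
  refine ⟨fper s x - j', ?_⟩
  rw [← hj', ← Function.iterate_add_apply, show fper s x - j' + j' = fper s x by omega]
  exact isPeriodicPt_minimalPeriod (act s) x

theorem repp_iterate {s : Equiv.Perm (Vertex d)} (hs : IsTreeAut s) (x : Fin d) (j : ℕ) :
    repp s ((act s)^[j] x) = repp s x := by
  induction j with
  | zero => rfl
  | succ j ih => rw [Function.iterate_succ_apply', repp_act hs, ih]

theorem repp_repp {s : Equiv.Perm (Vertex d)} (hs : IsTreeAut s) (x : Fin d) :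
    repp s (repp s x) = repp s x := by
  obtain ⟨j, hj⟩ := (mem_orbF_iff hs).mp (repp_mem hs x)
  rw [← hj, repp_iterate hs]
  exact hj.symm

open scoped Classical in
/-- index of `x` in the orbit of its representative -/
noncomputable def idxF (s : Equiv.Perm (Vertex d)) (x : Fin d) : ℕ :=
  if h : ∃ i : ℕ, (act s)^[i] (repp s x) = x then Nat.find h else 0

open scoped Classical

theorem idxF_spec {s : Equiv.Perm (Vertex d)} (hs : IsTreeAut s) (x : Fin d) :
    (act s)^[idxF s x] (repp s x) = x := by
  rw [idxF, dif_pos (exists_idx hs x)]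
  exact Nat.find_spec (exists_idx hs x)

theorem idxF_le {s : Equiv.Perm (Vertex d)} (hs : IsTreeAut s) {x : Fin d} {i : ℕ}
    (hi : (act s)^[i] (repp s x) = x) : idxF s x ≤ i := by
  rw [idxF, dif_pos (exists_idx hs x)]
  exact Nat.find_le hi

theorem idxF_lt {s : Equiv.Perm (Vertex d)} (hs : IsTreeAut s) (x : Fin d) :
    idxF s x < fper s x := by
  have hspec := idxF_spec hs x
  by_contra hcon
  push_neg at hcon
  have hper : (act s)^[fper s x] (repp s x) = repp s x := by
    have := isPeriodicPt_minimalPeriod (act s) (repp s x)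
    rwa [← fper, fper_repp hs] at this
  have h1 : (act s)^[idxF s x - fper s x] (repp s x) = x := by
    have h2 : (act s)^[idxF s x - fper s x + fper s x] (repp s x) = x := by
      rw [show idxF s x - fper s x + fper s x = idxF s x by
        have := fper_pos hs x; omega]
      exact hspec
    rwa [Function.iterate_add_apply, hper] at h2
  have := idxF_le hs h1
  have := fper_pos hs x
  omega

theorem idxF_repp {s : Equiv.Perm (Vertex d)} (hs : IsTreeAut s) (x : Fin d) :
    idxF s (repp s x) = 0 := by
  rw [idxF, dif_pos (exists_idx hs (repp s x)), Nat.find_eq_zero]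
  simp only [Function.iterate_zero, id_eq]
  exact repp_repp hs x

theorem idxF_act_succ {s : Equiv.Perm (Vertex d)} (hs : IsTreeAut s) (x : Fin d)
    (h : idxF s x + 1 < fper s x) : idxF s (act s x) = idxF s x + 1 := by
  have hr : repp s (act s x) = repp s x := repp_act hs x
  have hspec : (act s)^[idxF s x + 1] (repp s (act s x)) = act s x := by
    rw [hr, Function.iterate_succ_apply', idxF_spec hs x]
  apply le_antisymm (idxF_le hs hspec)
  by_contra hcon
  push_neg at hcon
  have hspec' : (act s)^[idxF s (act s x)] (repp s x) = act s x := by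
    have := idxF_spec hs (act s x); rwa [hr] at this
  rcases Nat.eq_zero_or_pos (idxF s (act s x)) with h0 | hpos
  · rw [h0] at hspec'
    simp only [Function.iterate_zero, id_eq] at hspec'
    have hper : (act s)^[idxF s x + 1] (repp s x) = repp s x := by
      rw [Function.iterate_succ_apply', idxF_spec hs x, hspec']
    have hdvd : fper s (repp s x) ∣ idxF s x + 1 :=
      isPeriodicPt_iff_minimalPeriod_dvd.mp hper
    rw [fper_repp hs] at hdvd
    have := Nat.le_of_dvd (by omega) hdvd
    omega
  · have hprev : (act s)^[idxF s (act s x) - 1] (repp s x) = x := by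
      apply act_inj hs
      rw [← Function.iterate_succ_apply' (act s) (idxF s (act s x) - 1) (repp s x),
        show (idxF s (act s x) - 1).succ = idxF s (act s x) by omega]
      exact hspec'
    have := idxF_le hs hprev
    omega

theorem idxF_act_wrap {s : Equiv.Perm (Vertex d)} (hs : IsTreeAut s) (x : Fin d)
    (h : idxF s x + 1 = fper s x) : idxF s (act s x) = 0 := by
  have hr : repp s (act s x) = repp s x := repp_act hs x
  have hspec : repp s (act s x) = act s x := by
    rw [hr]
    have h1 : (act s)^[idxF s x + 1] (repp s x) = act s x := by
      rw [Function.iterate_succ_apply', idxF_spec hs x]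
    rw [h, ← fper_repp hs x] at h1
    rw [← h1]
    exact (isPeriodicPt_minimalPeriod (act s) (repp s x)).symm
  have hex : ∃ i : ℕ, (act s)^[i] (repp s (act s x)) = act s x := ⟨0, by simpa using hspec⟩
  rw [idxF, dif_pos hex]
  exact (Nat.find_eq_zero hex).mpr (by simpa using hspec)

end TreeAutProof
namespace TreeAutProof

variable {d : ℕ}

open Function
open scoped Classical

/-- A conjugate pair of tree automorphisms. -/
def Nice (p : Equiv.Perm (Vertex d) × Equiv.Perm (Vertex d)) : Prop :=
  IsTreeAut p.1 ∧ IsTreeAut p.2 ∧ ∃ g, IsTreeAut g ∧ g * p.1 * g⁻¹ = p.2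

open scoped Classical in
/-- A chosen conjugator for the pair `p`. -/
noncomputable def cj (p : Equiv.Perm (Vertex d) × Equiv.Perm (Vertex d)) :
    Equiv.Perm (Vertex d) :=
  if h : ∃ g, IsTreeAut g ∧ g * p.1 * g⁻¹ = p.2 then h.choose else 1

theorem cj_ta {p : Equiv.Perm (Vertex d) × Equiv.Perm (Vertex d)} (hp : Nice p) :
    IsTreeAut (cj p) := by
  rw [cj, dif_pos hp.2.2]
  exact hp.2.2.choose_spec.1

theorem cj_conj {p : Equiv.Perm (Vertex d) × Equiv.Perm (Vertex d)} (hp : Nice p) :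
    cj p * p.1 * (cj p)⁻¹ = p.2 := by
  rw [cj, dif_pos hp.2.2]
  exact hp.2.2.choose_spec.2

theorem cj_inter {p : Equiv.Perm (Vertex d) × Equiv.Perm (Vertex d)} (hp : Nice p) :
    cj p * p.1 = p.2 * cj p := by
  have h := cj_conj hp
  have : cj p * p.1 * (cj p)⁻¹ * cj p = p.2 * cj p := by rw [h]
  simpa [mul_assoc] using this

theorem cj_pow_inter {p : Equiv.Perm (Vertex d) × Equiv.Perm (Vertex d)} (hp : Nice p)
    (n : ℕ) : cj p * p.1 ^ n = p.2 ^ n * cj p := by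
  induction n with
  | zero => simp
  | succ n ih =>
    rw [pow_succ, ← mul_assoc, ih, mul_assoc, cj_inter hp, pow_succ, mul_assoc]

theorem act_pow_transfer {p : Equiv.Perm (Vertex d) × Equiv.Perm (Vertex d)} (hp : Nice p)
    (n : ℕ) (z : Fin d) :
    act (p.2 ^ n) (act (cj p) z) = act (cj p) (act (p.1 ^ n) z) := by
  have h1 : act (p.2 ^ n * cj p) z = act (cj p * p.1 ^ n) z := by rw [cj_pow_inter hp]
  rwa [act_mul (ta_pow hp.2.1 n) (cj_ta hp), act_mul (cj_ta hp) (ta_pow hp.1 n)] at h1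

theorem iter_transfer {p : Equiv.Perm (Vertex d) × Equiv.Perm (Vertex d)} (hp : Nice p)
    (n : ℕ) (z : Fin d) :
    (act p.2)^[n] (act (cj p) z) = act (cj p) ((act p.1)^[n] z) := by
  rw [← act_pow hp.2.1, ← act_pow hp.1, act_pow_transfer hp]

theorem fper_transfer {p : Equiv.Perm (Vertex d) × Equiv.Perm (Vertex d)} (hp : Nice p)
    (z : Fin d) : fper p.2 (act (cj p) z) = fper p.1 z := by
  apply Nat.dvd_antisymm
  · apply isPeriodicPt_iff_minimalPeriod_dvd.mp
    show (act p.2)^[fper p.1 z] (act (cj p) z) = act (cj p) z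
    rw [iter_transfer hp]
    congr 1
    exact isPeriodicPt_minimalPeriod (act p.1) z
  · apply isPeriodicPt_iff_minimalPeriod_dvd.mp
    show (act p.1)^[fper p.2 (act (cj p) z)] z = z
    apply act_inj (cj_ta hp)
    rw [← iter_transfer hp]
    exact isPeriodicPt_minimalPeriod (act p.2) (act (cj p) z)

/-- The child instance of `p` at first-level letter `x`. -/
noncomputable def child (p : Equiv.Perm (Vertex d) × Equiv.Perm (Vertex d)) (x : Fin d) :
    Equiv.Perm (Vertex d) × Equiv.Perm (Vertex d) :=
  (state (p.1 ^ fper p.1 x) [repp p.1 x],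
   state (p.2 ^ fper p.1 x) [act (cj p) (repp p.1 x)])

theorem pow_fper_fix_rep {s : Equiv.Perm (Vertex d)} (hs : IsTreeAut s) (x : Fin d) :
    (s ^ fper s x) [repp s x] = [repp s x] := by
  rw [act_spec (ta_pow hs _), act_pow hs]
  congr 1
  have := isPeriodicPt_minimalPeriod (act s) (repp s x)
  rwa [← fper, fper_repp hs] at this

theorem child_conj {p : Equiv.Perm (Vertex d) × Equiv.Perm (Vertex d)} (hp : Nice p)
    (x : Fin d) :
    state (cj p) [repp p.1 x] * (child p x).1 * (state (cj p) [repp p.1 x])⁻¹ =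
      (child p x).2 := by
  set m := fper p.1 x
  set r := repp p.1 x
  have h1 : state (cj p * p.1 ^ m) [r] = state (cj p) [r] * state (p.1 ^ m) [r] := by
    rw [state_mul (cj_ta hp) (ta_pow hp.1 m), pow_fper_fix_rep hp.1 x]
  have h2 : state (p.2 ^ m * cj p) [r] = state (p.2 ^ m) [act (cj p) r] * state (cj p) [r] := by
    rw [state_mul (ta_pow hp.2.1 m) (cj_ta hp), act_spec (cj_ta hp)]
  have h3 : state (cj p) [r] * state (p.1 ^ m) [r] =
      state (p.2 ^ m) [act (cj p) r] * state (cj p) [r] := by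
    rw [← h1, ← h2, cj_pow_inter hp]
  show state (cj p) [r] * state (p.1 ^ m) [r] * (state (cj p) [r])⁻¹ =
    state (p.2 ^ m) [act (cj p) r]
  rw [h3, mul_assoc, mul_inv_cancel, mul_one]

theorem nice_child {p : Equiv.Perm (Vertex d) × Equiv.Perm (Vertex d)} (hp : Nice p)
    (x : Fin d) : Nice (child p x) := by
  refine ⟨state_ta (ta_pow hp.1 _) _, state_ta (ta_pow hp.2.1 _) _,
    state (cj p) [repp p.1 x], state_ta (cj_ta hp) _, child_conj hp x⟩

/-- The recursively defined conjugator. -/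
noncomputable def ThetaF :
    ℕ → Equiv.Perm (Vertex d) × Equiv.Perm (Vertex d) → Vertex d → Vertex d
  | 0, _, _ => []
  | _ + 1, _, [] => []
  | n + 1, p, x :: w =>
      act (p.2 ^ idxF p.1 x) (act (cj p) (repp p.1 x)) ::
        (state (p.2 ^ idxF p.1 x) [act (cj p) (repp p.1 x)])
          (ThetaF n (child p x) ((state (p.1 ^ idxF p.1 x) [repp p.1 x])⁻¹ w))

noncomputable def Th (p : Equiv.Perm (Vertex d) × Equiv.Perm (Vertex d)) (v : Vertex d) :
    Vertex d := ThetaF v.length p v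

theorem th_nil (p : Equiv.Perm (Vertex d) × Equiv.Perm (Vertex d)) : Th p [] = [] := rfl

theorem th_cons {p : Equiv.Perm (Vertex d) × Equiv.Perm (Vertex d)} (hp : Nice p)
    (x : Fin d) (w : Vertex d) :
    Th p (x :: w) = act (p.2 ^ idxF p.1 x) (act (cj p) (repp p.1 x)) ::
      (state (p.2 ^ idxF p.1 x) [act (cj p) (repp p.1 x)])
        (Th (child p x) ((state (p.1 ^ idxF p.1 x) [repp p.1 x])⁻¹ w)) := by
  have hlen : ((state (p.1 ^ idxF p.1 x) [repp p.1 x])⁻¹ w).length = w.length :=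
    ta_len (ta_inv (state_ta (ta_pow hp.1 _) _)) w
  unfold Th
  rw [hlen]
  rfl

theorem th_len : ∀ n (p : Equiv.Perm (Vertex d) × Equiv.Perm (Vertex d)), Nice p →
    ∀ v : Vertex d, v.length ≤ n → (Th p v).length = v.length := by
  intro n
  induction n with
  | zero =>
    intro p _ v hv
    rw [List.length_eq_zero_iff.mp (Nat.le_zero.mp hv)]
    rfl
  | succ n ih =>
    intro p hp v hv
    match v with
    | [] => rfl
    | x :: w =>
      rw [th_cons hp, List.length_cons, List.length_cons]
      have h1 := ta_len (state_ta (ta_pow hp.2.1 (idxF p.1 x)) [act (cj p) (repp p.1 x)])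
        (Th (child p x) ((state (p.1 ^ idxF p.1 x) [repp p.1 x])⁻¹ w))
      rw [h1]
      have h2 : ((state (p.1 ^ idxF p.1 x) [repp p.1 x])⁻¹ w).length = w.length :=
        ta_len (ta_inv (state_ta (ta_pow hp.1 _) _)) w
      rw [ih (child p x) (nice_child hp x) _ (by simp at hv; omega), h2]

end TreeAutProof
namespace TreeAutProof

variable {d : ℕ}

open Function

theorem act_pow_succ {t : Equiv.Perm (Vertex d)} (ht : IsTreeAut t) (i : ℕ) (y : Fin d) :
    act (t ^ (i + 1)) y = act t (act (t ^ i) y) := by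
  rw [pow_succ', act_mul ht (ta_pow ht i)]

theorem state_succ_gen {t : Equiv.Perm (Vertex d)} (ht : IsTreeAut t) (i : ℕ) (y : Fin d) :
    state (t ^ (i + 1)) [y] = state t [act (t ^ i) y] * state (t ^ i) [y] := by
  rw [pow_succ', state_mul ht (ta_pow ht i), act_spec (ta_pow ht i)]

theorem pow_idx_apply {s : Equiv.Perm (Vertex d)} (hs : IsTreeAut s) (x : Fin d) :
    (s ^ idxF s x) [repp s x] = [x] := by
  rw [act_spec (ta_pow hs _), act_pow hs, idxF_spec hs]

theorem state_succ_idx {s : Equiv.Perm (Vertex d)} (hs : IsTreeAut s) (x : Fin d) :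
    state (s ^ (idxF s x + 1)) [repp s x] =
      state s [x] * state (s ^ idxF s x) [repp s x] := by
  rw [state_succ_gen hs, act_pow hs, idxF_spec hs]

theorem act_pow_fper_rep {s : Equiv.Perm (Vertex d)} (hs : IsTreeAut s) (x : Fin d) :
    act (s ^ fper s x) (repp s x) = repp s x := by
  rw [act_pow hs]
  have := isPeriodicPt_minimalPeriod (act s) (repp s x)
  rwa [← fper, fper_repp hs] at this

theorem act_pow_fper_cj {p : Equiv.Perm (Vertex d) × Equiv.Perm (Vertex d)} (hp : Nice p)
    (x : Fin d) :
    act (p.2 ^ fper p.1 x) (act (cj p) (repp p.1 x)) = act (cj p) (repp p.1 x) := by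
  rw [act_pow hp.2.1, iter_transfer hp, ← act_pow hp.1, act_pow_fper_rep hp.1]

theorem fper_act {s : Equiv.Perm (Vertex d)} (hs : IsTreeAut s) (x : Fin d) :
    fper s (act s x) = fper s x := by
  have := fper_iterate hs x 1
  simpa using this

theorem child_act {p : Equiv.Perm (Vertex d) × Equiv.Perm (Vertex d)} (hp : Nice p)
    (x : Fin d) : child p (act p.1 x) = child p x := by
  unfold child
  rw [repp_act hp.1, fper_act hp.1]

theorem th_inter : ∀ n (p : Equiv.Perm (Vertex d) × Equiv.Perm (Vertex d)), Nice p →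
    ∀ v : Vertex d, v.length ≤ n → Th p (p.1 v) = p.2 (Th p v) := by
  intro n
  induction n with
  | zero =>
    intro p hp v hv
    rw [List.length_eq_zero_iff.mp (Nat.le_zero.mp hv), ta_nil hp.1, th_nil, ta_nil hp.2.1]
  | succ n ih =>
    intro p hp v hv
    match v with
    | [] => rw [ta_nil hp.1, th_nil, ta_nil hp.2.1]
    | x :: w =>
      have hs := hp.1
      have ht := hp.2.1
      have hq := nice_child hp x
      have hwlen : w.length ≤ n := by
        simp only [List.length_cons] at hv; omega
      rw [state_cons hs x w,
        th_cons hp (act p.1 x) (state p.1 [x] w),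
        th_cons hp x w,
        state_cons ht]
      rw [repp_act hs x, child_act hp x]
      by_cases hcase : idxF p.1 x + 1 < fper p.1 x
      · rw [idxF_act_succ hs x hcase]
        congr 1
        · exact act_pow_succ ht (idxF p.1 x) _
        · rw [state_succ_gen ht (idxF p.1 x)]
          rw [Equiv.Perm.mul_apply]
          congr 2
          rw [state_succ_idx hs x, mul_inv_rev, Equiv.Perm.mul_apply,
            Equiv.Perm.inv_apply_self]
      · have hm : idxF p.1 x + 1 = fper p.1 x := by
          have := idxF_lt hs x; omega
        rw [idxF_act_wrap hs x hm]
        simp only [pow_zero, state_one, act_one, Equiv.Perm.one_apply, inv_one]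
        congr 1
        · rw [← act_pow_succ ht (idxF p.1 x), hm, act_pow_fper_cj hp x]
        · -- wrap case: use the induction hypothesis
          have hcollapse : state p.2 [act (p.2 ^ idxF p.1 x) (act (cj p) (repp p.1 x))] *
              state (p.2 ^ idxF p.1 x) [act (cj p) (repp p.1 x)] =
              (child p x).2 := by
            rw [← state_succ_gen ht (idxF p.1 x), hm]
            rfl
          have hlhsarg : state p.1 [x] w =
              (child p x).1 ((state (p.1 ^ idxF p.1 x) [repp p.1 x])⁻¹ w) := by
            have h1 : (child p x).1 = state p.1 [x] * state (p.1 ^ idxF p.1 x) [repp p.1 x] := by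
              show state (p.1 ^ fper p.1 x) [repp p.1 x] = _
              rw [← hm, state_succ_idx hs x]
            rw [h1, Equiv.Perm.mul_apply, Equiv.Perm.apply_inv_self]
          rw [hlhsarg]
          have hulen : ((state (p.1 ^ idxF p.1 x) [repp p.1 x])⁻¹ w).length ≤ n := by
            rw [ta_len (ta_inv (state_ta (ta_pow hs _) _)) w]
            exact hwlen
          rw [ih (child p x) hq _ hulen]
          rw [← Equiv.Perm.mul_apply, hcollapse]

end TreeAutProof
namespace TreeAutProof

variable {d : ℕ}

open Function

theorem th_head {p : Equiv.Perm (Vertex d) × Equiv.Perm (Vertex d)} (hp : Nice p) (x : Fin d) :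
    act (p.2 ^ idxF p.1 x) (act (cj p) (repp p.1 x)) = act (cj p) x := by
  rw [act_pow hp.2.1, iter_transfer hp, idxF_spec hp.1]

theorem th_inj : ∀ n (p : Equiv.Perm (Vertex d) × Equiv.Perm (Vertex d)), Nice p →
    ∀ v v' : Vertex d, v.length ≤ n → v'.length ≤ n → Th p v = Th p v' → v = v' := by
  intro n
  induction n with
  | zero =>
    intro p _ v v' hv hv' _
    rw [List.length_eq_zero_iff.mp (Nat.le_zero.mp hv), List.length_eq_zero_iff.mp (Nat.le_zero.mp hv')]
  | succ n ih =>
    intro p hp v v' hv hv' heq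
    match v, v' with
    | [], [] => rfl
    | [], x :: w => rw [th_nil, th_cons hp] at heq; exact absurd heq.symm (List.cons_ne_nil _ _)
    | x :: w, [] => rw [th_nil, th_cons hp] at heq; exact absurd heq (List.cons_ne_nil _ _)
    | x :: w, x' :: w' =>
      rw [th_cons hp x w, th_cons hp x' w'] at heq
      have hhead : act (cj p) x = act (cj p) x' := by
        have h1 := (List.cons.injEq _ _ _ _ ▸ heq).1
        rwa [th_head hp x, th_head hp x'] at h1
      have hx : x = x' := act_inj (cj_ta hp) hhead
      subst hx
      have htail := (List.cons.injEq _ _ _ _ ▸ heq).2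
      have h2 := (state (p.2 ^ idxF p.1 x) [act (cj p) (repp p.1 x)]).injective htail
      have h3 := ih (child p x) (nice_child hp x) _ _
        (by rw [ta_len (ta_inv (state_ta (ta_pow hp.1 _) _)) w]
            simp only [List.length_cons] at hv; omega)
        (by rw [ta_len (ta_inv (state_ta (ta_pow hp.1 _) _)) w']
            simp only [List.length_cons] at hv'; omega) h2
      have h4 := (state (p.1 ^ idxF p.1 x) [repp p.1 x])⁻¹.injective h3
      rw [h4]

theorem th_bij {p : Equiv.Perm (Vertex d) × Equiv.Perm (Vertex d)} (hp : Nice p) :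
    Function.Bijective (Th p) := by
  constructor
  · intro v v' heq
    exact th_inj (max v.length v'.length) p hp v v' (le_max_left _ _) (le_max_right _ _) heq
  · intro u
    have hfin : Finite {v : Vertex d // v.length = u.length} := by
      apply Set.Finite.to_subtype (vertex_level_finite u.length)
    set F : {v : Vertex d // v.length = u.length} → {v : Vertex d // v.length = u.length} :=
      fun v => ⟨Th p v.1, by rw [th_len v.1.length p hp v.1 le_rfl, v.2]⟩ with hF
    have hFinj : Function.Injective F := by
      intro v v' heq
      apply Subtype.ext
      have := congrArg Subtype.val heq
      exact th_inj (max v.1.length v'.1.length) p hp _ _ (le_max_left _ _)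
        (le_max_right _ _) this
    obtain ⟨v, hv⟩ := (Finite.injective_iff_surjective.mp hFinj) ⟨u, rfl⟩
    exact ⟨v.1, congrArg Subtype.val hv⟩

open scoped Classical in
/-- The conjugator as a permutation. -/
noncomputable def ThP (p : Equiv.Perm (Vertex d) × Equiv.Perm (Vertex d)) :
    Equiv.Perm (Vertex d) :=
  if h : Function.Bijective (Th p) then Equiv.ofBijective _ h else 1

theorem thP_apply {p : Equiv.Perm (Vertex d) × Equiv.Perm (Vertex d)} (hp : Nice p)
    (v : Vertex d) : ThP p v = Th p v := by
  rw [ThP, dif_pos (th_bij hp)]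
  rfl

theorem th_prefix : ∀ n (p : Equiv.Perm (Vertex d) × Equiv.Perm (Vertex d)),
    Nice p → ∀ v w : Vertex d, v.length ≤ n → Th p v <+: Th p (v ++ w) := by
  intro n
  induction n with
  | zero =>
    intro p hp v w hv
    rw [List.length_eq_zero_iff.mp (Nat.le_zero.mp hv), th_nil]
    exact List.nil_prefix
  | succ n ih =>
    intro p hp v w hv
    match v with
    | [] => rw [th_nil]; exact List.nil_prefix
    | x :: v' =>
      rw [List.cons_append, th_cons hp x v', th_cons hp x (v' ++ w),
        List.cons_prefix_cons]
      refine ⟨rfl, ?_⟩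
      have hR : IsTreeAut (state (p.1 ^ idxF p.1 x) [repp p.1 x])⁻¹ :=
        ta_inv (state_ta (ta_pow hp.1 _) _)
      rw [apply_append hR v' w]
      apply (state_ta (ta_pow hp.2.1 _) _).prefix_mono
      apply ih (child p x) (nice_child hp x)
      rw [ta_len hR v']
      simp only [List.length_cons] at hv
      omega

theorem thP_ta {p : Equiv.Perm (Vertex d) × Equiv.Perm (Vertex d)} (hp : Nice p) :
    IsTreeAut (ThP p) := by
  constructor
  · intro v
    rw [thP_apply hp]
    exact th_len v.length p hp v le_rfl
  · intro v w
    rw [thP_apply hp, thP_apply hp]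
    exact th_prefix v.length p hp v w le_rfl

theorem thP_conj {p : Equiv.Perm (Vertex d) × Equiv.Perm (Vertex d)} (hp : Nice p) :
    ThP p * p.1 * (ThP p)⁻¹ = p.2 := by
  have hcomm : ThP p * p.1 = p.2 * ThP p := by
    apply Equiv.ext
    intro v
    rw [Equiv.Perm.mul_apply, Equiv.Perm.mul_apply, thP_apply hp, thP_apply hp]
    exact th_inter (p.1 v).length p hp v (le_of_eq (hp.1.1 v).symm)
  rw [hcomm, mul_assoc, mul_inv_cancel, mul_one]

end TreeAutProof
namespace TreeAutProof

variable {d : ℕ}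

open Function

/-- Witnessed instance: the components of `p` are the canonical orbit-power states
at the vertices `va`, `vb`. -/
def Wit (a b : Equiv.Perm (Vertex d)) (p : Equiv.Perm (Vertex d) × Equiv.Perm (Vertex d))
    (va vb : Vertex d) : Prop :=
  p.1 = state (a ^ orbitCard a va) va ∧ p.2 = state (b ^ orbitCard b vb) vb

theorem state_pow_wit {a : Equiv.Perm (Vertex d)} (ha : IsTreeAut a) (va : Vertex d) (i : ℕ) :
    state (a ^ (orbitCard a va * i)) va = (state (a ^ orbitCard a va) va) ^ i := by
  rw [pow_mul, state_pow_of_fixed (ta_pow ha _) (pow_orbitCard_fixed ha va)]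

theorem fix_pow_mul {a : Equiv.Perm (Vertex d)} (ha : IsTreeAut a) (va : Vertex d) (i : ℕ) :
    (a ^ (orbitCard a va * i)) va = va := by
  rw [pow_mul]; exact pow_apply_fixed (pow_orbitCard_fixed ha va) i

theorem apply_pow_mul_append {a : Equiv.Perm (Vertex d)} (ha : IsTreeAut a) (va : Vertex d)
    (i : ℕ) (z : Vertex d) :
    (a ^ (orbitCard a va * i)) (va ++ z) = va ++ ((state (a ^ orbitCard a va) va) ^ i) z := by
  rw [apply_append (ta_pow ha _) va z, fix_pow_mul ha, state_pow_wit ha]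

theorem state_of_wit_pow {a : Equiv.Perm (Vertex d)} (ha : IsTreeAut a) (va : Vertex d)
    (i : ℕ) (y : Fin d) :
    state ((state (a ^ orbitCard a va) va) ^ i) [y] =
      state (a ^ (orbitCard a va * i)) (va ++ [y]) := by
  rw [← state_pow_wit ha, state_state (ta_pow ha _)]

theorem orbit_append_wit {a : Equiv.Perm (Vertex d)} (ha : IsTreeAut a) {va : Vertex d}
    {s : Equiv.Perm (Vertex d)} (hs : IsTreeAut s) (hwit : s = state (a ^ orbitCard a va) va)
    (x : Fin d) :
    orbitCard a (va ++ [repp s x]) = orbitCard a va * fper s x := by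
  rw [orbitCard_append_single ha va _, ← hwit]
  congr 1
  exact fper_repp hs x

theorem wit_child {a b : Equiv.Perm (Vertex d)} (ha : IsTreeAut a) (hb : IsTreeAut b)
    {p : Equiv.Perm (Vertex d) × Equiv.Perm (Vertex d)} {va vb : Vertex d} (hp : Nice p)
    (hw : Wit a b p va vb) (x : Fin d) :
    Wit a b (child p x) (va ++ [repp p.1 x]) (vb ++ [act (cj p) (repp p.1 x)]) := by
  have hA : orbitCard a (va ++ [repp p.1 x]) = orbitCard a va * fper p.1 x :=
    orbit_append_wit ha hp.1 hw.1 x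
  have hB : orbitCard b (vb ++ [act (cj p) (repp p.1 x)]) = orbitCard b vb * fper p.1 x := by
    rw [orbitCard_append_single hb vb _, ← hw.2]
    have h1 : fper p.2 (act (cj p) (repp p.1 x)) = fper p.1 x := by
      rw [fper_transfer hp, fper_repp hp.1]
    exact congrArg _ h1
  constructor
  · show state (p.1 ^ fper p.1 x) [repp p.1 x] = _
    rw [hA, hw.1, ← state_of_wit_pow ha, ← hw.1]
  · show state (p.2 ^ fper p.1 x) [act (cj p) (repp p.1 x)] = _
    rw [hB, hw.2, ← state_of_wit_pow hb, ← hw.2]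

theorem state_thP_single {p : Equiv.Perm (Vertex d) × Equiv.Perm (Vertex d)} (hp : Nice p)
    (x : Fin d) :
    state (ThP p) [x] = state (p.2 ^ idxF p.1 x) [act (cj p) (repp p.1 x)] *
      ThP (child p x) * (state (p.1 ^ idxF p.1 x) [repp p.1 x])⁻¹ := by
  apply Equiv.ext
  intro u
  rw [state_apply (thP_ta hp) [x] u]
  have h1 : ([x] ++ u : Vertex d) = x :: u := rfl
  rw [h1, thP_apply hp, th_cons hp x u]
  rw [Equiv.Perm.mul_apply, Equiv.Perm.mul_apply, thP_apply (nice_child hp x)]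
  rfl

theorem th_single {p : Equiv.Perm (Vertex d) × Equiv.Perm (Vertex d)} (hp : Nice p)
    (x : Fin d) :
    Th p [x] = [act (p.2 ^ idxF p.1 x) (act (cj p) (repp p.1 x))] := by
  rw [th_cons hp x []]
  have h1 : (state (p.1 ^ idxF p.1 x) [repp p.1 x])⁻¹ ([] : Vertex d) = [] :=
    ta_nil (ta_inv (state_ta (ta_pow hp.1 _) _))
  rw [h1, th_nil, ta_nil (state_ta (ta_pow hp.2.1 _) _)]

theorem th_state_formula {a b : Equiv.Perm (Vertex d)} (ha : IsTreeAut a) (hb : IsTreeAut b) :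
    ∀ n (p : Equiv.Perm (Vertex d) × Equiv.Perm (Vertex d)) (va vb : Vertex d),
    Nice p → Wit a b p va vb → ∀ v : Vertex d, v ≠ [] → v.length ≤ n →
    ∃ (q : Equiv.Perm (Vertex d) × Equiv.Perm (Vertex d)) (ya yb za zb : Vertex d) (k l : ℕ),
      Nice q ∧ Wit a b q ya yb ∧
      state (ThP p) v = state (b ^ l) zb * ThP q * (state (a ^ k) za)⁻¹ ∧
      (a ^ k) za = va ++ v ∧ (b ^ l) zb = vb ++ Th p v ∧
      k + orbitCard a va ≤ orbitCard a za ∧ l + orbitCard b vb ≤ orbitCard b zb := by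
  intro n
  induction n with
  | zero =>
    intro p va vb _ _ v hne hv
    exact absurd (List.length_eq_zero_iff.mp (Nat.le_zero.mp hv)) hne
  | succ n ih =>
    intro p va vb hp hw v hne hv
    match v with
    | [] => exact absurd rfl hne
    | x :: w =>
      have hq : Nice (child p x) := nice_child hp x
      have hwq : Wit a b (child p x) (va ++ [repp p.1 x]) (vb ++ [act (cj p) (repp p.1 x)]) :=
        wit_child ha hb hp hw x
      have hOA : orbitCard a (va ++ [repp p.1 x]) = orbitCard a va * fper p.1 x :=
        orbit_append_wit ha hp.1 hw.1 x
      have hOB : orbitCard b (vb ++ [act (cj p) (repp p.1 x)]) =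
          orbitCard b vb * fper p.1 x := by
        rw [orbitCard_append_single hb vb _, ← hw.2]
        have h1 : fper p.2 (act (cj p) (repp p.1 x)) = fper p.1 x := by
          rw [fper_transfer hp, fper_repp hp.1]
        exact congrArg _ h1
      have him : idxF p.1 x < fper p.1 x := idxF_lt hp.1 x
      have hLeq : state (p.2 ^ idxF p.1 x) [act (cj p) (repp p.1 x)] =
          state (b ^ (orbitCard b vb * idxF p.1 x)) (vb ++ [act (cj p) (repp p.1 x)]) := by
        rw [hw.2, state_of_wit_pow hb]
      have hReq : state (p.1 ^ idxF p.1 x) [repp p.1 x] =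
          state (a ^ (orbitCard a va * idxF p.1 x)) (va ++ [repp p.1 x]) := by
        rw [hw.1, state_of_wit_pow ha]
      by_cases hwcase : w = []
      · subst hwcase
        refine ⟨child p x, va ++ [repp p.1 x], vb ++ [act (cj p) (repp p.1 x)],
          va ++ [repp p.1 x], vb ++ [act (cj p) (repp p.1 x)],
          orbitCard a va * idxF p.1 x, orbitCard b vb * idxF p.1 x,
          hq, hwq, ?_, ?_, ?_, ?_, ?_⟩
        · rw [show (x :: ([] : Vertex d)) = [x] from rfl, state_thP_single hp x, hLeq, hReq]
        · rw [apply_pow_mul_append ha va _ _, ← hw.1, pow_idx_apply hp.1 x]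
        · rw [apply_pow_mul_append hb vb _ _, ← hw.2,
            show (x :: ([] : Vertex d)) = [x] from rfl, th_single hp x]
          congr 1
          exact act_spec (ta_pow hp.2.1 _) _
        · rw [hOA]
          have h2 : orbitCard a va * (idxF p.1 x + 1) ≤ orbitCard a va * fper p.1 x :=
            Nat.mul_le_mul_left _ him
          rw [Nat.mul_succ] at h2
          omega
        · rw [hOB]
          have h2 : orbitCard b vb * (idxF p.1 x + 1) ≤ orbitCard b vb * fper p.1 x :=
            Nat.mul_le_mul_left _ him
          rw [Nat.mul_succ] at h2
          omega
      · -- step case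
        have hR : IsTreeAut (state (p.1 ^ idxF p.1 x) [repp p.1 x]) :=
          state_ta (ta_pow hp.1 _) _
        have hL : IsTreeAut (state (p.2 ^ idxF p.1 x) [act (cj p) (repp p.1 x)]) :=
          state_ta (ta_pow hp.2.1 _) _
        have hTq : IsTreeAut (ThP (child p x)) := thP_ta hq
        have hune : (state (p.1 ^ idxF p.1 x) [repp p.1 x])⁻¹ w ≠ [] := by
          intro hcon
          apply hwcase
          have := congrArg (state (p.1 ^ idxF p.1 x) [repp p.1 x]) hcon
          rwa [Equiv.Perm.apply_inv_self, ta_nil hR] at this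
        have hulen : ((state (p.1 ^ idxF p.1 x) [repp p.1 x])⁻¹ w).length ≤ n := by
          rw [ta_len (ta_inv hR) w]
          simp only [List.length_cons] at hv
          omega
        obtain ⟨q', ya2, yb2, za, zb, k0, l0, hNq', hWq', hstq, hA, hB, hIA, hIB⟩ :=
          ih (child p x) (va ++ [repp p.1 x]) (vb ++ [act (cj p) (repp p.1 x)]) hq hwq
            ((state (p.1 ^ idxF p.1 x) [repp p.1 x])⁻¹ w) hune hulen
        refine ⟨q', ya2, yb2, za, zb, orbitCard a va * idxF p.1 x + k0,
          orbitCard b vb * idxF p.1 x + l0, hNq', hWq', ?_, ?_, ?_, ?_, ?_⟩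
        · -- the state equation
          have hdec : state (ThP p) (x :: w) = state (state (ThP p) [x]) w :=
            state_state (thP_ta hp) [x] w
          rw [hdec, state_thP_single hp x]
          rw [state_mul (ta_mul hL hTq) (ta_inv hR) w, state_mul hL hTq, hstq,
            state_inv hR w]
          have hmergeL : state (state (p.2 ^ idxF p.1 x) [act (cj p) (repp p.1 x)])
                (ThP (child p x) ((state (p.1 ^ idxF p.1 x) [repp p.1 x])⁻¹ w)) *
                state (b ^ l0) zb =
              state (b ^ (orbitCard b vb * idxF p.1 x + l0)) zb := by
            rw [hLeq, thP_apply hq,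
              ← state_state (ta_pow hb (orbitCard b vb * idxF p.1 x)), ← hB,
              ← state_mul (ta_pow hb _) (ta_pow hb _) zb, ← pow_add]
          have hA' := hA
          rw [hReq] at hA'
          have hmergeR : state (state (p.1 ^ idxF p.1 x) [repp p.1 x])
                ((state (p.1 ^ idxF p.1 x) [repp p.1 x])⁻¹ w) * state (a ^ k0) za =
              state (a ^ (orbitCard a va * idxF p.1 x + k0)) za := by
            rw [hReq, ← state_state (ta_pow ha (orbitCard a va * idxF p.1 x)), ← hA',
              ← state_mul (ta_pow ha _) (ta_pow ha _) za, ← pow_add]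
          calc state (state (p.2 ^ idxF p.1 x) [act (cj p) (repp p.1 x)])
                (ThP (child p x) ((state (p.1 ^ idxF p.1 x) [repp p.1 x])⁻¹ w)) *
              (state (b ^ l0) zb * ThP q' * (state (a ^ k0) za)⁻¹) *
              (state (state (p.1 ^ idxF p.1 x) [repp p.1 x])
                ((state (p.1 ^ idxF p.1 x) [repp p.1 x])⁻¹ w))⁻¹
              = (state (state (p.2 ^ idxF p.1 x) [act (cj p) (repp p.1 x)])
                  (ThP (child p x) ((state (p.1 ^ idxF p.1 x) [repp p.1 x])⁻¹ w)) *
                state (b ^ l0) zb) * ThP q' *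
                (state (state (p.1 ^ idxF p.1 x) [repp p.1 x])
                  ((state (p.1 ^ idxF p.1 x) [repp p.1 x])⁻¹ w) * state (a ^ k0) za)⁻¹ := by
                rw [mul_inv_rev]
                group
            _ = state (b ^ (orbitCard b vb * idxF p.1 x + l0)) zb * ThP q' *
                (state (a ^ (orbitCard a va * idxF p.1 x + k0)) za)⁻¹ := by
                rw [hmergeL, hmergeR]
        · -- the a-side vertex equation
          rw [pow_add, Equiv.Perm.mul_apply, hA, List.append_assoc,
            apply_pow_mul_append ha va _ _, ← hw.1,
            apply_append (ta_pow hp.1 _) [repp p.1 x] _, pow_idx_apply hp.1 x,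
            Equiv.Perm.apply_inv_self]
          rfl
        · -- the b-side vertex equation
          rw [pow_add, Equiv.Perm.mul_apply, hB, List.append_assoc,
            apply_pow_mul_append hb vb _ _, ← hw.2, th_cons hp x w,
            apply_append (ta_pow hp.2.1 _) [act (cj p) (repp p.1 x)] _,
            act_spec (ta_pow hp.2.1 _)]
          rfl
        · rw [hOA] at hIA
          have h2 : orbitCard a va * (idxF p.1 x + 1) ≤ orbitCard a va * fper p.1 x :=
            Nat.mul_le_mul_left _ him
          rw [Nat.mul_succ] at h2
          omega
        · rw [hOB] at hIB
          have h2 : orbitCard b vb * (idxF p.1 x + 1) ≤ orbitCard b vb * fper p.1 x :=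
            Nat.mul_le_mul_left _ him
          rw [Nat.mul_succ] at h2
          omega

end TreeAutProof
namespace TreeAutProof

variable {d : ℕ}

theorem orbitCard_nil {a : Equiv.Perm (Vertex d)} (ha : IsTreeAut a) :
    orbitCard a ([] : Vertex d) = 1 := by
  have h1 : (a ^ 1) ([] : Vertex d) = [] := by rw [pow_one]; exact ta_nil ha
  exact Nat.dvd_one.mp ((pow_fixed_iff ha [] 1).mp h1)

theorem wit_root {a b : Equiv.Perm (Vertex d)} (ha : IsTreeAut a) (hb : IsTreeAut b) :
    Wit a b (a, b) ([] : Vertex d) ([] : Vertex d) := by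
  constructor
  · show a = state (a ^ orbitCard a ([] : Vertex d)) []
    rw [orbitCard_nil ha, pow_one, state_nil ha]
  · show b = state (b ^ orbitCard b ([] : Vertex d)) []
    rw [orbitCard_nil hb, pow_one, state_nil hb]

theorem thP_finiteState {a b : Equiv.Perm (Vertex d)} (ha : IsTreeAut a) (hb : IsTreeAut b)
    (hba : BoundedAut a) (hbb : BoundedAut b) (hnice : Nice (a, b)) :
    FiniteState (ThP (a, b)) := by
  set PA : Set (Equiv.Perm (Vertex d)) :=
    {g | ∃ (u : Vertex d) (k : ℕ), k ≤ orbitCard a u ∧ g = state (a ^ k) u} with hPA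
  set PB : Set (Equiv.Perm (Vertex d)) :=
    {g | ∃ (u : Vertex d) (k : ℕ), k ≤ orbitCard b u ∧ g = state (b ^ k) u} with hPB
  have hPAfin : PA.Finite := powStates_finite ha hba
  have hPBfin : PB.Finite := powStates_finite hb hbb
  set InstSet : Set (Equiv.Perm (Vertex d) × Equiv.Perm (Vertex d)) :=
    {q | Nice q ∧ ∃ ya yb : Vertex d, Wit a b q ya yb} with hInst
  have hInstFin : InstSet.Finite := by
    apply Set.Finite.subset (hPAfin.prod hPBfin)
    rintro q ⟨hNq, ya, yb, hwq⟩
    exact ⟨⟨ya, orbitCard a ya, le_rfl, hwq.1⟩, ⟨yb, orbitCard b yb, le_rfl, hwq.2⟩⟩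
  have hTfin : ({ThP (a, b)} ∪
      (fun t : Equiv.Perm (Vertex d) × Equiv.Perm (Vertex d) × Equiv.Perm (Vertex d) =>
        t.1 * t.2.1 * t.2.2⁻¹) '' (PB ×ˢ ((ThP '' InstSet) ×ˢ PA)) :
      Set (Equiv.Perm (Vertex d))).Finite :=
    (Set.finite_singleton _).union
      ((hPBfin.prod ((hInstFin.image ThP).prod hPAfin)).image _)
  apply Set.Finite.subset hTfin
  rintro g ⟨v, rfl⟩
  rcases eq_or_ne v [] with hv | hv
  · left
    simp only [hv]
    show state (ThP (a, b)) [] ∈ _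
    rw [state_nil (thP_ta hnice)]
    rfl
  · right
    obtain ⟨q, ya, yb, za, zb, k, l, hNq, hWq, hstate, _, _, hIA, hIB⟩ :=
      th_state_formula ha hb v.length (a, b) [] [] hnice (wit_root ha hb) v hv le_rfl
    refine ⟨(state (b ^ l) zb, ThP q, state (a ^ k) za),
      ⟨⟨zb, l, by omega, rfl⟩, ⟨⟨q, ⟨hNq, ya, yb, hWq⟩, rfl⟩, ⟨za, k, by omega, rfl⟩⟩⟩, ?_⟩
    show state (b ^ l) zb * ThP q * (state (a ^ k) za)⁻¹ = state (ThP (a, b)) v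
    exact hstate.symm

end TreeAutProof
open TreeAutProof in
/-- Two bounded automorphisms of the regular rooted `d`-ary
tree are conjugate in `Aut(T)` if and only if they are conjugate in the group
`F(X)` of finite-state automorphisms. -/
theorem conj_in_AutT_iff_conj_in_FSG_of_bounded
    (d : ℕ) (hd : 2 ≤ d) (a b : Equiv.Perm (Vertex d))
    (ha : IsTreeAut a) (hb : IsTreeAut b)
    (hba : BoundedAut a) (hbb : BoundedAut b) :
    (∃ h : Equiv.Perm (Vertex d), IsTreeAut h ∧ h * a * h⁻¹ = b) ↔
      (∃ h : Equiv.Perm (Vertex d), IsTreeAut h ∧ FiniteState h ∧ h * a * h⁻¹ = b) := by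
  constructor
  · rintro ⟨h, hh, hconj⟩
    have hnice : Nice (a, b) := ⟨ha, hb, h, hh, hconj⟩
    exact ⟨ThP (a, b), thP_ta hnice, thP_finiteState ha hb hba hbb hnice, thP_conj hnice⟩
  · rintro ⟨h, hh, _, hconj⟩
    exact ⟨h, hh, hconj⟩
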